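/- For every real n ≥ 3 and every r ≥ 0, the equation H(n, r, α) = 0 has exactly one root α in the interval [π/n, π/2). -/

import Mathlib

open Real

noncomputable def Hfun (n r α : ℝ) : ℝ :=
  sin α * cos ((π - 2*α)/(n-2)) ^ 2 * log (tan (π/4 + (π - 2*α)/(2*(n-2))))
    - cos α ^ 2 * sin ((π - 2*α)/(n-2)) * log (tan (π/4 + α/2))
    - r * sin (2*α) * sin ((π - 2*α)/(n-2))
    - r * (n-2) * cos ((π - 2*α)/(n-2)) * sin ((π - 2*α)/(n-2)) ^ 2

open Filter

noncomputable def Lfun (x : ℝ) : ℝ := Real.log (Real.tan (π/4 + x/2))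

noncomputable def gfun (x : ℝ) : ℝ := Real.cos x ^ 2 * Lfun x / Real.sin x

lemma Lfun_hasDerivAt {x : ℝ} (h1 : -(π/2) < x) (h2 : x < π/2) :
    HasDerivAt Lfun (1 / Real.cos x) x := by
  have hπ := Real.pi_pos
  have hu1 : 0 < π/4 + x/2 := by linarith
  have hu2 : π/4 + x/2 < π/2 := by linarith
  have hcu : 0 < Real.cos (π/4 + x/2) := Real.cos_pos_of_mem_Ioo ⟨by linarith, hu2⟩
  have hsu : 0 < Real.sin (π/4 + x/2) := Real.sin_pos_of_pos_of_lt_pi hu1 (by linarith)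
  have htu : 0 < Real.tan (π/4 + x/2) := by
    rw [Real.tan_eq_sin_div_cos]; positivity
  have hlin : HasDerivAt (fun y : ℝ => π/4 + y/2) (1/2) x := by
    simpa using ((hasDerivAt_id x).div_const 2).const_add (π/4)
  have htan := (Real.hasDerivAt_tan hcu.ne').comp x hlin
  have hlog := htan.log htu.ne'
  have h : HasDerivAt Lfun ((1 / Real.cos (π/4 + x/2) ^ 2 * (1/2)) / Real.tan (π/4 + x/2)) x := by
    unfold Lfun; simpa [Function.comp] using hlog
  convert h using 1
  have hcx : Real.cos x = 2 * Real.sin (π/4 + x/2) * Real.cos (π/4 + x/2) := by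
    have h := Real.sin_two_mul (π/4 + x/2)
    rw [show 2*(π/4+x/2) = x + π/2 by ring, Real.sin_add_pi_div_two] at h
    linarith
  rw [Real.tan_eq_sin_div_cos, hcx]
  generalize hS : Real.sin (π/4 + x/2) = S at *
  generalize hC : Real.cos (π/4 + x/2) = C at *
  field_simp

lemma Lfun_pos {x : ℝ} (h1 : 0 < x) (h2 : x < π/2) : 0 < Lfun x := by
  have hπ := Real.pi_pos
  have : 1 < Real.tan (π/4 + x/2) := by
    rw [← Real.tan_pi_div_four]
    exact Real.tan_lt_tan_of_nonneg_of_lt_pi_div_two (by positivity) (by linarith) (by linarith)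
  exact Real.log_pos this

lemma Lfun_zero : Lfun 0 = 0 := by
  simp [Lfun, Real.tan_pi_div_four]

noncomputable def psif (x : ℝ) : ℝ := Lfun x - Real.sin x / (1 + Real.sin x ^ 2)

lemma psif_hasDerivAt {x : ℝ} (h1 : -(π/2) < x) (h2 : x < π/2) :
    HasDerivAt psif (1 / Real.cos x -
      (Real.cos x * (1 + Real.sin x ^ 2) - Real.sin x * (2 * Real.sin x ^ 1 * Real.cos x))
        / (1 + Real.sin x ^ 2) ^ 2) x := by
  have hs := Real.hasDerivAt_sin x
  have hden : HasDerivAt (fun y => 1 + Real.sin y ^ 2) (2 * Real.sin x ^ 1 * Real.cos x) x := by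
    simpa using (hs.pow 2).const_add 1
  have hfrac := hs.div hden (by positivity)
  exact (Lfun_hasDerivAt h1 h2).sub hfrac

lemma psif_pos {x : ℝ} (h1 : 0 < x) (h2 : x < π/2) : 0 < psif x := by
  have hπ := Real.pi_pos
  have hmono : StrictMonoOn psif (Set.Ico 0 (π/2)) := by
    apply strictMonoOn_of_deriv_pos (convex_Ico 0 (π/2))
    · intro y hy
      exact ((psif_hasDerivAt (by linarith [hy.1]) hy.2).continuousAt).continuousWithinAt
    · intro y hy
      rw [interior_Ico] at hy
      have hd := psif_hasDerivAt (by linarith [hy.1]) hy.2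
      rw [hd.deriv]
      have hc : 0 < Real.cos y := Real.cos_pos_of_mem_Ioo ⟨by linarith [hy.1], hy.2⟩
      have hsy : 0 < Real.sin y := Real.sin_pos_of_pos_of_lt_pi hy.1 (by linarith [hy.2])
      have hpy := Real.sin_sq_add_cos_sq y
      rw [sub_pos, div_lt_div_iff₀ (by positivity) hc]
      nlinarith [mul_pos hsy hsy, sq_nonneg (Real.sin y * Real.cos y)]
  have h0 : psif 0 = 0 := by simp [psif, Lfun_zero]
  have := hmono (Set.left_mem_Ico.mpr (by positivity)) ⟨le_of_lt h1, h2⟩ h1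
  linarith [this]

lemma key_ineq {x : ℝ} (h1 : 0 < x) (h2 : x < π/2) :
    Real.sin x < (1 + Real.sin x ^ 2) * Lfun x := by
  have h := psif_pos h1 h2
  have hpos : (0:ℝ) < 1 + Real.sin x ^ 2 := by positivity
  have hlt : Real.sin x / (1 + Real.sin x ^ 2) < Lfun x := by
    unfold psif at h; linarith
  calc Real.sin x = (Real.sin x / (1 + Real.sin x ^ 2)) * (1 + Real.sin x ^ 2) := by field_simp
    _ < Lfun x * (1 + Real.sin x ^ 2) := mul_lt_mul_of_pos_right hlt hpos
    _ = (1 + Real.sin x ^ 2) * Lfun x := by ring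

lemma gfun_hasDerivAt {x : ℝ} (h1 : 0 < x) (h2 : x < π/2) :
    HasDerivAt gfun
      (((((2:ℕ) * Real.cos x ^ 1 * -Real.sin x) * Lfun x + Real.cos x ^ 2 * (1 / Real.cos x))
          * Real.sin x - Real.cos x ^ 2 * Lfun x * Real.cos x) / Real.sin x ^ 2) x := by
  have hπ := Real.pi_pos
  have hsy : Real.sin x ≠ 0 := (Real.sin_pos_of_pos_of_lt_pi h1 (by linarith)).ne'
  have hnum : HasDerivAt (fun y => Real.cos y ^ 2 * Lfun y)
      (((2:ℕ) * Real.cos x ^ 1 * -Real.sin x) * Lfun x + Real.cos x ^ 2 * (1 / Real.cos x)) x :=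
    ((Real.hasDerivAt_cos x).pow 2).mul (Lfun_hasDerivAt (by linarith) h2)
  exact hnum.div (Real.hasDerivAt_sin x) hsy

lemma gfun_anti : StrictAntiOn gfun (Set.Ioo 0 (π/2)) := by
  have hπ := Real.pi_pos
  apply strictAntiOn_of_deriv_neg (convex_Ioo 0 (π/2))
  · intro y hy
    exact (gfun_hasDerivAt hy.1 hy.2).continuousAt.continuousWithinAt
  · intro y hy
    rw [interior_Ioo] at hy
    have hd := gfun_hasDerivAt hy.1 hy.2
    rw [hd.deriv]
    have hc : 0 < Real.cos y := Real.cos_pos_of_mem_Ioo ⟨by linarith [hy.1], hy.2⟩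
    have hs : 0 < Real.sin y := Real.sin_pos_of_pos_of_lt_pi hy.1 (by linarith [hy.2])
    have hL : 0 < Lfun y := Lfun_pos hy.1 hy.2
    have hkey := key_ineq hy.1 hy.2
    have hpy := Real.sin_sq_add_cos_sq y
    apply div_neg_of_neg_of_pos _ (by positivity)
    have hc2 : Real.cos y ^ 2 * (1 / Real.cos y) = Real.cos y := by
      rw [sq]; field_simp
    rw [hc2]
    push_cast
    nlinarith [mul_lt_mul_of_pos_left hkey hc, mul_pos hc hL, mul_pos (mul_pos hc hL) (mul_pos hs hs)]

lemma gfun_tendsto_zero : Tendsto gfun (nhdsWithin 0 (Set.Ioi 0)) (nhds 1) := by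
  have hπ := Real.pi_pos
  have hL0 : HasDerivAt Lfun 1 0 := by
    have := Lfun_hasDerivAt (x := 0) (by linarith) (by linarith)
    simpa using this
  have hslopeL : Tendsto (fun x => Lfun x / x) (nhdsWithin 0 {(0:ℝ)}ᶜ) (nhds 1) := by
    have h := hasDerivAt_iff_tendsto_slope.mp hL0
    refine h.congr fun x => ?_
    rw [slope_def_field, Lfun_zero, sub_zero, sub_zero]
  have hslopeS : Tendsto (fun x => Real.sin x / x) (nhdsWithin 0 {(0:ℝ)}ᶜ) (nhds 1) := by
    have h := hasDerivAt_iff_tendsto_slope.mp (Real.hasDerivAt_sin 0)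
    rw [Real.cos_zero] at h
    refine h.congr fun x => ?_
    rw [slope_def_field, Real.sin_zero, sub_zero, sub_zero]
  have hmono : nhdsWithin (0:ℝ) (Set.Ioi 0) ≤ nhdsWithin 0 {(0:ℝ)}ᶜ :=
    nhdsWithin_mono 0 (fun x hx => ne_of_gt hx)
  have h1 : Tendsto (fun x : ℝ => Real.cos x ^ 2) (nhdsWithin 0 (Set.Ioi 0)) (nhds 1) := by
    have hc : Continuous fun x : ℝ => Real.cos x ^ 2 := by continuity
    have := hc.continuousWithinAt (s := Set.Ioi 0) (x := (0:ℝ))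
    simpa [ContinuousWithinAt] using this
  have hmain : Tendsto (fun x => Real.cos x ^ 2 * ((Lfun x / x) / (Real.sin x / x)))
      (nhdsWithin 0 (Set.Ioi 0)) (nhds 1) := by
    have := h1.mul (((hslopeL.mono_left hmono).div (hslopeS.mono_left hmono)) one_ne_zero)
    simpa using this
  apply hmain.congr'
  filter_upwards [Ioo_mem_nhdsGT_of_mem (show (0:ℝ) ∈ Set.Ico 0 π from ⟨le_refl _, hπ⟩)] with x hx
  have hs : Real.sin x ≠ 0 := (Real.sin_pos_of_pos_of_lt_pi hx.1 hx.2).ne'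
  simp only [gfun]
  field_simp [hs, hx.1.ne']

lemma gfun_tendsto_pi : Tendsto gfun (nhdsWithin (π/2) (Set.Iio (π/2))) (nhds 0) := by
  have hπ := Real.pi_pos
  have hnum : Tendsto (fun α => Real.cos α ^ 2 * Lfun α) (nhdsWithin (π/2) (Set.Iio (π/2))) (nhds 0) := by
    have hupper : Tendsto (fun α : ℝ => π * (π/2 - α)) (nhdsWithin (π/2) (Set.Iio (π/2))) (nhds 0) := by
      have hc : Continuous fun α : ℝ => π * (π/2 - α) := by continuity
      have := hc.continuousWithinAt (s := Set.Iio (π/2)) (x := (π/2 : ℝ))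
      simpa [ContinuousWithinAt] using this
    apply tendsto_of_tendsto_of_tendsto_of_le_of_le' tendsto_const_nhds hupper
    · filter_upwards [Ioo_mem_nhdsLT_of_mem (show (π/2) ∈ Set.Ioc 0 (π/2) from ⟨by linarith, le_refl _⟩)] with α hα
      exact mul_nonneg (sq_nonneg _) (Lfun_pos hα.1 hα.2).le
    · filter_upwards [Ioo_mem_nhdsLT_of_mem (show (π/2) ∈ Set.Ioc 0 (π/2) from ⟨by linarith, le_refl _⟩)] with α hα
      obtain ⟨hα1, hα2⟩ := hα
      have hu1 : 0 < π/4 + α/2 := by linarith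
      have hu2 : π/4 + α/2 < π/2 := by linarith
      have hcu : 0 < Real.cos (π/4 + α/2) := Real.cos_pos_of_mem_Ioo ⟨by linarith, hu2⟩
      have hsu : Real.sin (π/4 + α/2) ≤ 1 := Real.sin_le_one _
      have htu : 0 < Real.tan (π/4 + α/2) := by
        rw [Real.tan_eq_sin_div_cos]
        exact div_pos (Real.sin_pos_of_pos_of_lt_pi hu1 (by linarith)) hcu
      set ε := π/2 - α with hε
      have hε0 : 0 < ε := by rw [hε]; linarith
      have hcu_lb : ε/π ≤ Real.cos (π/4 + α/2) := by
        have h := Real.mul_le_sin (x := π/4 - α/2) (by linarith) (by linarith)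
        rw [show π/4 - α/2 = π/2 - (π/4 + α/2) by ring, Real.sin_pi_div_two_sub] at h
        calc ε/π = 2/π * (π/2 - (π/4 + α/2)) := by rw [hε]; field_simp; ring
          _ ≤ Real.cos (π/4 + α/2) := h
      have hL_le : Lfun α ≤ 1 / Real.cos (π/4 + α/2) := by
        have h1 : Lfun α ≤ Real.tan (π/4 + α/2) - 1 := Real.log_le_sub_one_of_pos htu
        have h2 : Real.tan (π/4 + α/2) ≤ 1 / Real.cos (π/4 + α/2) := by
          rw [Real.tan_eq_sin_div_cos]
          gcongr
        linarith
      have hcosα_le : Real.cos α ≤ ε := by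
        rw [hε, ← Real.sin_pi_div_two_sub]
        exact Real.sin_le (by linarith)
      have hcosα0 : 0 ≤ Real.cos α := Real.cos_nonneg_of_mem_Icc ⟨by linarith, by linarith⟩
      have hεπ : 0 < ε/π := div_pos hε0 hπ
      calc Real.cos α ^ 2 * Lfun α ≤ ε^2 * (1/(ε/π)) := by
            apply mul_le_mul
            · exact pow_le_pow_left₀ hcosα0 hcosα_le 2
            · calc Lfun α ≤ 1 / Real.cos (π/4 + α/2) := hL_le
                _ ≤ 1/(ε/π) := one_div_le_one_div_of_le hεπ hcu_lb
            · exact (Lfun_pos hα1 hα2).le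
            · positivity
        _ = π * (π/2 - α) := by
              have hne : π - 2*α ≠ 0 := by linarith
              rw [hε]; field_simp [hne]
  have hden : Tendsto Real.sin (nhdsWithin (π/2) (Set.Iio (π/2))) (nhds 1) := by
    have := Real.continuous_sin.continuousWithinAt (s := Set.Iio (π/2)) (x := (π/2:ℝ))
    simpa [ContinuousWithinAt] using this
  have := hnum.div hden one_ne_zero
  rw [show (0:ℝ) = 0/1 by norm_num]; exact this

noncomputable def betaf (n α : ℝ) : ℝ := (π - 2*α)/(n-2)

noncomputable def Qf (n α : ℝ) : ℝ :=
  Real.sin (2*α) + (n-2) * Real.cos (betaf n α) * Real.sin (betaf n α)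

noncomputable def Ff (n r α : ℝ) : ℝ :=
  Real.sin α * (gfun (betaf n α) - gfun α) - r * Qf n α

lemma betaf_hasDerivAt {n : ℝ} (hn : (2:ℝ) < n) (x : ℝ) :
    HasDerivAt (betaf n) (-2/(n-2)) x := by
  unfold betaf
  simpa using (((hasDerivAt_id x).const_mul 2).const_sub π).div_const (n-2)

lemma Qf_hasDerivAt {n : ℝ} (hn : (2:ℝ) < n) (x : ℝ) :
    HasDerivAt (Qf n) (2*Real.cos (2*x) - 2*Real.cos (2*(betaf n x))) x := by
  have hβd := betaf_hasDerivAt hn x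
  have h1 : HasDerivAt (fun y : ℝ => Real.sin (2*y)) (Real.cos (2*x) * (2*1)) x :=
    ((hasDerivAt_id x).const_mul 2).sin
  have h4 := (hβd.cos.const_mul (n-2)).mul hβd.sin
  have h := h1.add h4
  have hne : n - 2 ≠ 0 := by linarith
  refine h.congr_deriv ?_
  rw [show Real.cos (2*(betaf n x)) = Real.cos (betaf n x)^2 - Real.sin (betaf n x)^2 from
    Real.cos_two_mul' _]
  field_simp
  ring

theorem stmt_9 (n r : ℝ) (hn : 3 ≤ n) (hr : 0 ≤ r) :
    ∃! α, α ∈ Set.Ico (π/n) (π/2) ∧ Hfun n r α = 0 := by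
  have hπ := Real.pi_pos
  have hn2 : (0:ℝ) < n - 2 := by linarith
  have hn0 : (0:ℝ) < n := by linarith
  have hπn_pos : 0 < π/n := by positivity
  have hπn_lt : π/n < π/2 := by
    rw [div_lt_div_iff₀ hn0 two_pos]; nlinarith
  -- basic facts about betaf on the interval
  have hβmem : ∀ α ∈ Set.Ico (π/n) (π/2), 0 < betaf n α ∧ betaf n α ≤ π/n := by
    intro α hα
    constructor
    · exact div_pos (by linarith [hα.2]) hn2
    · unfold betaf
      rw [div_le_div_iff₀ hn2 hn0]
      have h := (div_le_iff₀ hn0).mp hα.1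
      nlinarith
  have hβIoo : ∀ α ∈ Set.Ico (π/n) (π/2), betaf n α ∈ Set.Ioo 0 (π/2) := by
    intro α hα
    exact ⟨(hβmem α hα).1, lt_of_le_of_lt (hβmem α hα).2 hπn_lt⟩
  have hαIoo : ∀ α ∈ Set.Ico (π/n) (π/2), α ∈ Set.Ioo 0 (π/2) := by
    intro α hα
    exact ⟨lt_of_lt_of_le hπn_pos hα.1, hα.2⟩
  have hβle : ∀ α ∈ Set.Ico (π/n) (π/2), betaf n α ≤ α :=
    fun α hα => le_trans (hβmem α hα).2 hα.1
  -- the key identity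
  have hident : ∀ α ∈ Set.Ico (π/n) (π/2), Hfun n r α = Real.sin (betaf n α) * Ff n r α := by
    intro α hα
    have hsβ : 0 < Real.sin (betaf n α) :=
      Real.sin_pos_of_pos_of_lt_pi (hβIoo α hα).1 (by linarith [(hβIoo α hα).2])
    have hsα : 0 < Real.sin α :=
      Real.sin_pos_of_pos_of_lt_pi (hαIoo α hα).1 (by linarith [(hαIoo α hα).2])
    simp only [betaf] at hsβ
    simp only [Hfun, Ff, Qf, gfun, Lfun, betaf]
    rw [show (π - 2*α)/(2*(n-2)) = ((π - 2*α)/(n-2))/2 by rw [div_div, mul_comm (n-2) 2]]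
    field_simp [hsα.ne', hsβ.ne']
    ring
  -- strict monotonicity of Ff
  have hPmono : StrictMonoOn (fun α => Real.sin α * (gfun (betaf n α) - gfun α))
      (Set.Ico (π/n) (π/2)) := by
    intro a ha b hb hab
    have hββ : betaf n b < betaf n a := by
      unfold betaf
      rw [div_lt_div_iff₀ hn2 hn2]
      nlinarith
    have h1 : gfun (betaf n a) < gfun (betaf n b) := gfun_anti (hβIoo b hb) (hβIoo a ha) hββ
    have h2 : gfun b < gfun a := gfun_anti (hαIoo a ha) (hαIoo b hb) hab
    have h3 : gfun a ≤ gfun (betaf n a) :=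
      gfun_anti.antitoneOn (hβIoo a ha) (hαIoo a ha) (hβle a ha)
    have hsa : 0 < Real.sin a :=
      Real.sin_pos_of_pos_of_lt_pi (hαIoo a ha).1 (by linarith [(hαIoo a ha).2])
    have hsab : Real.sin a < Real.sin b := by
      apply Real.strictMonoOn_sin ⟨by linarith [(hαIoo a ha).1], (hαIoo a ha).2.le⟩
        ⟨by linarith [(hαIoo b hb).1], (hαIoo b hb).2.le⟩ hab
    have d1 : (0:ℝ) ≤ gfun (betaf n a) - gfun a := by linarith
    calc Real.sin a * (gfun (betaf n a) - gfun a)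
        ≤ Real.sin b * (gfun (betaf n a) - gfun a) := by nlinarith
      _ < Real.sin b * (gfun (betaf n b) - gfun b) := by nlinarith
  have hQanti : AntitoneOn (Qf n) (Set.Ico (π/n) (π/2)) := by
    apply antitoneOn_of_deriv_nonpos (convex_Ico _ _)
    · exact fun x _ => (Qf_hasDerivAt (by linarith) x).continuousAt.continuousWithinAt
    · intro x _
      exact (Qf_hasDerivAt (by linarith : (2:ℝ) < n) x).differentiableAt.differentiableWithinAt
    · intro x hx
      rw [interior_Ico] at hx
      have hxm : x ∈ Set.Ico (π/n) (π/2) := ⟨hx.1.le, hx.2⟩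
      rw [(Qf_hasDerivAt (by linarith : (2:ℝ) < n) x).deriv]
      have h := Real.cos_le_cos_of_nonneg_of_le_pi
        (by linarith [(hβmem x hxm).1] : (0:ℝ) ≤ 2*(betaf n x))
        (by linarith [hx.2] : 2*x ≤ π)
        (by linarith [hβle x hxm] : 2*(betaf n x) ≤ 2*x)
      linarith
  have hFmono : StrictMonoOn (Ff n r) (Set.Ico (π/n) (π/2)) := by
    intro a ha b hb hab
    have hP : Real.sin a * (gfun (betaf n a) - gfun a) < Real.sin b * (gfun (betaf n b) - gfun b) :=
      hPmono ha hb hab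
    have hQ := hQanti ha hb hab.le
    have := mul_le_mul_of_nonneg_left hQ hr
    simp only [Ff]
    linarith
  -- F at the left endpoint
  have hβπn : betaf n (π/n) = π/n := by
    unfold betaf
    rw [div_eq_div_iff hn2.ne' hn0.ne']
    field_simp
  have hF0 : Ff n r (π/n) ≤ 0 := by
    have hQ0 : 0 ≤ Qf n (π/n) := by
      unfold Qf
      rw [hβπn]
      have h2πn : 2*(π/n) ≤ π := by
        rw [show 2*(π/n) = (2*π)/n by ring, div_le_iff₀ hn0]; nlinarith
      have hs1 : 0 ≤ Real.sin (2*(π/n)) :=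
        Real.sin_nonneg_of_nonneg_of_le_pi (by positivity) h2πn
      have hs2 : 0 ≤ Real.sin (π/n) :=
        Real.sin_nonneg_of_nonneg_of_le_pi (by positivity) (by linarith [hπn_lt])
      have hc : 0 ≤ Real.cos (π/n) :=
        Real.cos_nonneg_of_mem_Icc ⟨by linarith, hπn_lt.le⟩
      have := mul_nonneg (mul_nonneg (show (0:ℝ) ≤ n-2 by linarith) hc) hs2
      linarith
    simp only [Ff]
    rw [hβπn]
    simp only [sub_self, mul_zero, zero_sub]
    simpa using mul_nonneg hr hQ0
  -- limit of F at π/2 from the left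
  have hβt : Tendsto (betaf n) (nhdsWithin (π/2) (Set.Iio (π/2))) (nhdsWithin 0 (Set.Ioi 0)) := by
    rw [tendsto_nhdsWithin_iff]
    constructor
    · have hc : Continuous (betaf n) := by unfold betaf; fun_prop
      have := hc.continuousWithinAt (s := Set.Iio (π/2)) (x := (π/2 : ℝ))
      have hval : betaf n (π/2) = 0 := by unfold betaf; rw [div_eq_zero_iff]; left; ring
      simpa [ContinuousWithinAt, hval] using this
    · filter_upwards [self_mem_nhdsWithin] with α hα
      exact div_pos (by simp at hα; linarith) hn2
  have hβt' : Tendsto (betaf n) (nhdsWithin (π/2) (Set.Iio (π/2))) (nhds 0) :=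
    hβt.mono_right nhdsWithin_le_nhds
  have hg1 : Tendsto (fun α => gfun (betaf n α)) (nhdsWithin (π/2) (Set.Iio (π/2))) (nhds 1) :=
    gfun_tendsto_zero.comp hβt
  have hsin1 : Tendsto Real.sin (nhdsWithin (π/2) (Set.Iio (π/2))) (nhds 1) := by
    have := Real.continuous_sin.continuousWithinAt (s := Set.Iio (π/2)) (x := (π/2:ℝ))
    simpa [ContinuousWithinAt] using this
  have hQ0t : Tendsto (Qf n) (nhdsWithin (π/2) (Set.Iio (π/2))) (nhds 0) := by
    have h1 : Tendsto (fun α : ℝ => Real.sin (2*α)) (nhdsWithin (π/2) (Set.Iio (π/2))) (nhds 0) := by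
      have hc : Continuous fun α : ℝ => Real.sin (2*α) := Real.continuous_sin.comp (continuous_const.mul continuous_id)
      have := hc.continuousWithinAt (s := Set.Iio (π/2)) (x := (π/2:ℝ))
      simpa [ContinuousWithinAt, show 2*(π/2) = π by ring] using this
    have h2 : Tendsto (fun α => Real.cos (betaf n α)) (nhdsWithin (π/2) (Set.Iio (π/2))) (nhds 1) := by
      have := (Real.continuous_cos.tendsto 0).comp hβt'
      rw [← Real.cos_zero]; exact this
    have h3 : Tendsto (fun α => Real.sin (betaf n α)) (nhdsWithin (π/2) (Set.Iio (π/2))) (nhds 0) := by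
      have := (Real.continuous_sin.tendsto 0).comp hβt'
      rw [← Real.sin_zero]; exact this
    have := h1.add (((tendsto_const_nhds (x := n - 2)).mul h2).mul h3)
    rw [show (0:ℝ) = 0 + (n-2)*1*0 by ring]; exact this
  have hFt : Tendsto (Ff n r) (nhdsWithin (π/2) (Set.Iio (π/2))) (nhds 1) := by
    have := (hsin1.mul (hg1.sub gfun_tendsto_pi)).sub ((tendsto_const_nhds (x := r)).mul hQ0t)
    rw [show (1:ℝ) = 1*(1-0) - r*0 by ring]; exact this
  -- find a point where F is positive
  have hexF : ∃ α₀ ∈ Set.Ico (π/n) (π/2), 0 < Ff n r α₀ := by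
    have h1 : ∀ᶠ α in nhdsWithin (π/2) (Set.Iio (π/2)), 1/2 < Ff n r α :=
      hFt.eventually (eventually_gt_nhds (by norm_num))
    have h2 : ∀ᶠ α in nhdsWithin (π/2) (Set.Iio (π/2)), α ∈ Set.Ico (π/n) (π/2) :=
      eventually_of_mem (Ico_mem_nhdsLT_of_mem ⟨hπn_lt, le_refl _⟩) (fun x hx => hx)
    obtain ⟨α₀, hα₀1, hα₀2⟩ := (h1.and h2).exists
    exact ⟨α₀, hα₀2, by linarith⟩
  -- continuity of F
  have hFcont : ContinuousOn (Ff n r) (Set.Ico (π/n) (π/2)) := by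
    have hgc : ContinuousOn gfun (Set.Ioo 0 (π/2)) :=
      fun x hx => (gfun_hasDerivAt hx.1 hx.2).continuousAt.continuousWithinAt
    have hβc : Continuous (betaf n) := by unfold betaf; fun_prop
    have h1 : ContinuousOn (fun α => gfun (betaf n α)) (Set.Ico (π/n) (π/2)) :=
      hgc.comp hβc.continuousOn hβIoo
    have h2 : ContinuousOn gfun (Set.Ico (π/n) (π/2)) := hgc.mono hαIoo
    have hQc : Continuous (Qf n) := by
      unfold Qf betaf
      fun_prop
    exact ((Real.continuous_sin.continuousOn.mul (h1.sub h2)).sub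
      (continuousOn_const.mul hQc.continuousOn))
  -- IVT
  obtain ⟨α₀, hα₀mem, hα₀pos⟩ := hexF
  have hsub : Set.Icc (π/n) α₀ ⊆ Set.Ico (π/n) (π/2) :=
    fun x hx => ⟨hx.1, lt_of_le_of_lt hx.2 hα₀mem.2⟩
  have hivt := intermediate_value_Icc hα₀mem.1 (hFcont.mono hsub)
  obtain ⟨c, hcmem, hc0⟩ := hivt ⟨hF0, hα₀pos.le⟩
  have hcIco : c ∈ Set.Ico (π/n) (π/2) := hsub hcmem
  refine ⟨c, ⟨hcIco, ?_⟩, ?_⟩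
  · rw [hident c hcIco, hc0, mul_zero]
  · rintro y ⟨hy, hHy⟩
    have hsy : 0 < Real.sin (betaf n y) :=
      Real.sin_pos_of_pos_of_lt_pi (hβIoo y hy).1 (by linarith [(hβIoo y hy).2])
    have hFy : Ff n r y = 0 := by
      have h := hident y hy
      rw [hHy] at h
      rcases mul_eq_zero.mp h.symm with h' | h'
      · exact absurd h' hsy.ne'
      · exact h'
    exact hFmono.injOn hy hcIco (by rw [hFy, hc0])
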